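/- Monotonicity in K of the Jensen-type cross-entropy bound: for i.i.d. ζ^1,...,ζ^{K+1} ~ p_θ(ζ) and any fixed z with p_θ(z|ζ) > 0, E_{ζ^{1..K}}[log (1/K) Σ_{k=1}^K p_θ(z|ζ^k)] ≤ E_{ζ^{1..K+1}}[log (1/(K+1)) Σ_{k=1}^{K+1} p_θ(z|ζ^k)]. -/

import Mathlib

open MeasureTheory Set
open scoped ENNReal NNReal

namespace JensenAux

variable {Θ : Type*} [MeasurableSpace Θ]

/-- Upper bound for `Measure.pi` on measurable boxes, without σ-finiteness. -/
lemma pi_box_le (μ : Measure Θ) {n : ℕ} (s : Fin n → Set Θ)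
    (hs : ∀ i, MeasurableSet (s i)) :
    Measure.pi (fun _ : Fin n => μ) (Set.univ.pi s) ≤ ∏ i, μ (s i) := by
  rw [Measure.pi_def, toMeasure_apply _ _ (MeasurableSet.pi countable_univ fun i _ => hs i)]
  simpa using OuterMeasure.pi_pi_le (fun _ : Fin n => μ.toOuterMeasure) s

/-- Null sets pull back to null sets along coordinate evaluations, without σ-finiteness. -/
lemma pi_eval_preimage_null' (μ : Measure Θ) {n : ℕ} (k : Fin n) {N : Set Θ}
    (hN : μ N = 0) :
    Measure.pi (fun _ : Fin n => μ) (Function.eval k ⁻¹' N) = 0 := by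
  rcases exists_measurable_superset_of_null hN with ⟨u, hNu, hum, hμu⟩
  refine measure_mono_null (Set.preimage_mono hNu) ?_
  refine le_antisymm ?_ zero_le
  have heq : Function.eval k ⁻¹' u
      = Set.univ.pi (Function.update (fun _ : Fin n => (Set.univ : Set Θ)) k u) :=
    (Set.univ_pi_update_univ (α := fun _ : Fin n => Θ) k u).symm
  rw [heq]
  refine (pi_box_le μ _ ?_).trans_eq ?_
  · intro i
    by_cases h : i = k
    · subst h; simpa using hum
    · simp [Function.update_of_ne h]
  · exact Finset.prod_eq_zero (Finset.mem_univ k) (by simp [hμu])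

lemma pi_restrict_le (μ : Measure Θ) {t : Set Θ} [SigmaFinite (μ.restrict t)]
    {n : ℕ} {A : Set (Fin n → Θ)} (hA : MeasurableSet A) :
    Measure.pi (fun _ : Fin n => μ.restrict t) A ≤ Measure.pi (fun _ : Fin n => μ) A := by
  have h : (Measure.pi (fun _ : Fin n => μ.restrict t)).toOuterMeasure ≤
      OuterMeasure.pi (fun _ : Fin n => μ.toOuterMeasure) := by
    rw [OuterMeasure.le_pi]
    intro s _
    have h1 : (Measure.pi (fun _ : Fin n => μ.restrict t)).toOuterMeasure (Set.univ.pi s)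
        = ∏ i, (μ.restrict t) (s i) := by
      rw [Measure.coe_toOuterMeasure]
      exact Measure.pi_pi _ s
    rw [h1]
    refine Finset.prod_le_prod' fun i _ => ?_
    have := Measure.restrict_le_self (μ := μ) (s := t)
    rw [Measure.le_iff'] at this
    simpa using this (s i)
  have h2 : Measure.pi (fun _ : Fin n => μ) A =
      OuterMeasure.pi (fun _ : Fin n => μ.toOuterMeasure) A := by
    rw [Measure.pi_def, toMeasure_apply _ _ hA]
  calc Measure.pi (fun _ : Fin n => μ.restrict t) A
      = (Measure.pi (fun _ : Fin n => μ.restrict t)).toOuterMeasure A := by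
        rw [Measure.coe_toOuterMeasure]
    _ ≤ OuterMeasure.pi (fun _ : Fin n => μ.toOuterMeasure) A := h A
    _ = Measure.pi (fun _ : Fin n => μ) A := h2.symm

/-- Product of restricted measures is the restriction of the product to the box. -/
lemma pi_restrict_eq (μ : Measure Θ) {t : Set Θ} (ht : MeasurableSet t)
    [SigmaFinite (μ.restrict t)] (n : ℕ) :
    Measure.pi (fun _ : Fin n => μ.restrict t)
      = (Measure.pi fun _ : Fin n => μ).restrict (Set.univ.pi fun _ => t) := by
  refine Measure.pi_eq fun s hs => ?_
  rw [Measure.restrict_apply (MeasurableSet.pi countable_univ fun i _ => hs i)]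
  have hbox : Set.univ.pi s ∩ (Set.univ.pi fun _ => t) = Set.univ.pi (fun i => s i ∩ t) :=
    (Set.pi_inter_distrib).symm
  rw [hbox]
  have hprod : ∀ i : Fin n, (μ.restrict t) (s i) = μ (s i ∩ t) := fun i =>
    Measure.restrict_apply (hs i)
  refine le_antisymm ?_ ?_
  · refine (pi_box_le μ _ fun i => (hs i).inter ht).trans_eq ?_
    exact Finset.prod_congr rfl fun i _ => (hprod i).symm
  · have hle := pi_restrict_le μ (t := t)
      (A := Set.univ.pi fun i => s i ∩ t)
      (MeasurableSet.pi countable_univ fun i _ => (hs i).inter ht)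
    refine le_trans (le_of_eq ?_) hle
    rw [Measure.pi_pi]
    refine Finset.prod_congr rfl fun i _ => ?_
    rw [hprod i, Measure.restrict_apply ((hs i).inter ht), Set.inter_assoc, Set.inter_self]

/-- Lintegral of a product of coordinate functions over a finite product measure. -/
lemma lintegral_pi_prod (μ : Measure Θ) [SigmaFinite μ] :
    ∀ (n : ℕ) (w : Fin n → Θ → ℝ≥0∞), (∀ i, Measurable (w i)) →
    ∫⁻ x, ∏ i, w i (x i) ∂(Measure.pi fun _ : Fin n => μ) = ∏ i, ∫⁻ a, w i a ∂μ := by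
  intro n
  induction n with
  | zero =>
      intro w hw
      simp [lintegral_const]
  | succ n ih =>
      intro w hw
      have hF : Measurable fun x : Fin (n + 1) → Θ => ∏ i, w i (x i) :=
        Finset.measurable_prod _ fun i _ => (hw i).comp (measurable_pi_apply i)
      have mp := (measurePreserving_piFinSuccAbove (fun _ : Fin (n + 1) => μ) 0).symm
      rw [← mp.lintegral_comp hF]
      have h2 : ∀ p : Θ × (Fin n → Θ),
          (∏ i, w i (((MeasurableEquiv.piFinSuccAbove (fun _ => Θ) 0).symm p) i))
            = w 0 p.1 * ∏ j : Fin n, w (Fin.succ j) (p.2 j) := by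
        intro p
        simp_rw [MeasurableEquiv.piFinSuccAbove_symm_apply, Fin.insertNthEquiv,
          Equiv.coe_fn_mk, Fin.insertNth_zero]
        rw [Fin.prod_univ_succ]
        simp
      simp_rw [h2]
      rw [lintegral_prod_mul (f := w 0)
        (g := fun y : Fin n → Θ => ∏ j : Fin n, w (Fin.succ j) (y j))
        ((hw 0).aemeasurable)
        ((Finset.measurable_prod Finset.univ (fun j _ =>
          (hw (Fin.succ j)).comp (measurable_pi_apply j))).aemeasurable)]
      rw [ih (fun j => w (Fin.succ j)) (fun j => hw _),
        Fin.prod_univ_succ (fun i => ∫⁻ a, w i a ∂μ)]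

/-- Product of `withDensity` measures. -/
lemma pi_withDensity (μ : Measure Θ) [SigmaFinite μ] (w : Θ → ℝ≥0∞) (hw : Measurable w)
    [SigmaFinite (μ.withDensity w)] (n : ℕ) :
    Measure.pi (fun _ : Fin n => μ.withDensity w)
      = (Measure.pi fun _ : Fin n => μ).withDensity (fun x => ∏ i, w (x i)) := by
  refine Measure.pi_eq fun s hs => ?_
  have hbox : MeasurableSet (Set.univ.pi s) :=
    MeasurableSet.pi countable_univ fun i _ => hs i
  rw [withDensity_apply _ hbox, ← lintegral_indicator hbox]
  have hind : ∀ x : Fin n → Θ,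
      (Set.univ.pi s).indicator (fun x => ∏ i, w (x i)) x
        = ∏ i, (s i).indicator w (x i) := by
    intro x
    by_cases hx : x ∈ Set.univ.pi s
    · rw [Set.indicator_of_mem hx]
      exact Finset.prod_congr rfl fun i _ =>
        (Set.indicator_of_mem (hx i (Set.mem_univ i)) w).symm
    · rw [Set.indicator_of_notMem hx]
      have : ∃ i, x i ∉ s i := by
        by_contra hcon
        push_neg at hcon
        exact hx fun i _ => hcon i
      obtain ⟨i, hi⟩ := this
      exact (Finset.prod_eq_zero (Finset.mem_univ i) (Set.indicator_of_notMem hi w)).symm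
  simp_rw [hind]
  rw [lintegral_pi_prod μ n _ (fun i => hw.indicator (hs i))]
  exact Finset.prod_congr rfl fun i _ => by
    rw [lintegral_indicator (hs i), withDensity_apply _ (hs i)]

/-- σ-finiteness of the restriction to the positivity set of an integrable function. -/
lemma sigmaFinite_restrict_pos {μ : Measure Θ} {g : Θ → ℝ} (hgm : Measurable g)
    (hg : Integrable g μ) : SigmaFinite (μ.restrict {x | 0 < g x}) := by
  set t := {x | 0 < g x} with htdef
  have ht : MeasurableSet t := measurableSet_lt measurable_const hgm
  refine ⟨⟨⟨fun m => {x | 1 / (m + 1 : ℝ) ≤ g x} ∪ tᶜ, fun _ => trivial, fun m => ?_, ?_⟩⟩⟩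
  · have hm1 : MeasurableSet {x | 1 / (m + 1 : ℝ) ≤ g x} := measurableSet_le measurable_const hgm
    calc (μ.restrict t) ({x | 1 / (m + 1 : ℝ) ≤ g x} ∪ tᶜ)
        ≤ (μ.restrict t) {x | 1 / (m + 1 : ℝ) ≤ g x} + (μ.restrict t) tᶜ :=
          measure_union_le _ _
      _ ≤ μ {x | 1 / (m + 1 : ℝ) ≤ g x} + 0 := by
          refine add_le_add ?_ ?_
          · rw [Measure.restrict_apply hm1]
            exact measure_mono Set.inter_subset_left
          · rw [Measure.restrict_apply ht.compl]
            simp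
      _ < ⊤ := by
          rw [add_zero]
          exact hg.measure_ge_lt_top (by positivity)
  · refine Set.eq_univ_of_forall fun x => ?_
    by_cases hx : x ∈ t
    · have hx' : 0 < g x := hx
      obtain ⟨m, hm⟩ := exists_nat_one_div_lt hx'
      exact Set.mem_iUnion.2 ⟨m, Or.inl (le_of_lt hm)⟩
    · exact Set.mem_iUnion.2 ⟨0, Or.inr hx⟩

/-- Removing one coordinate is measure preserving for i.i.d. probability products. -/
lemma measurePreserving_succAbove (ν : Measure Θ) [IsProbabilityMeasure ν] {n : ℕ}
    (j : Fin (n + 1)) :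
    MeasurePreserving (fun y : Fin (n + 1) → Θ => fun k => y (j.succAbove k))
      (Measure.pi fun _ : Fin (n + 1) => ν) (Measure.pi fun _ : Fin n => ν) := by
  have mp := measurePreserving_piFinSuccAbove (fun _ : Fin (n + 1) => ν) j
  have snd : MeasurePreserving (Prod.snd : Θ × (Fin n → Θ) → (Fin n → Θ))
      (ν.prod (Measure.pi fun _ : Fin n => ν)) (Measure.pi fun _ : Fin n => ν) :=
    ⟨measurable_snd, by rw [Measure.map_snd_prod]; simp⟩
  exact snd.comp mp

/-- The core Jensen monotonicity step, for a probability measure. -/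
lemma key_ineq (ν : Measure Θ) [IsProbabilityMeasure ν] (K : ℕ) (hK : 0 < K)
    (f : Θ → ℝ) (hf_pos : ∀ x, 0 < f x) (hf_meas : Measurable f)
    (h1 : Integrable (fun y : Fin K → Θ => Real.log ((∑ k, f (y k)) / K))
      (Measure.pi fun _ : Fin K => ν))
    (h2 : Integrable (fun y : Fin (K + 1) → Θ => Real.log ((∑ k, f (y k)) / (K + 1)))
      (Measure.pi fun _ : Fin (K + 1) => ν)) :
    ∫ y, Real.log ((∑ k, f (y k)) / K) ∂(Measure.pi fun _ : Fin K => ν)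
      ≤ ∫ y, Real.log ((∑ k, f (y k)) / (K + 1)) ∂(Measure.pi fun _ : Fin (K + 1) => ν) := by
  haveI : Nonempty (Fin K) := ⟨⟨0, hK⟩⟩
  set G : (Fin K → Θ) → ℝ := fun y => Real.log ((∑ k, f (y k)) / K) with hG
  have hGm : Measurable G :=
    Real.measurable_log.comp ((Finset.measurable_sum _ fun k _ =>
      hf_meas.comp (measurable_pi_apply k)).div_const _)
  have hKR : (0:ℝ) < K := by exact_mod_cast hK
  -- the leave-one-out maps
  set T : Fin (K + 1) → (Fin (K + 1) → Θ) → (Fin K → Θ) :=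
    fun j y k => y (j.succAbove k) with hT
  have hmp : ∀ j, MeasurePreserving (T j)
      (Measure.pi fun _ : Fin (K + 1) => ν) (Measure.pi fun _ : Fin K => ν) :=
    fun j => measurePreserving_succAbove ν j
  have hint_j : ∀ j, Integrable (fun y => G (T j y)) (Measure.pi fun _ : Fin (K + 1) => ν) :=
    fun j => ((hmp j).integrable_comp hGm.aestronglyMeasurable).2 h1
  have hintegral_j : ∀ j, ∫ y, G (T j y) ∂(Measure.pi fun _ : Fin (K + 1) => ν)
      = ∫ y, G y ∂(Measure.pi fun _ : Fin K => ν) := by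
    intro j
    rw [← (hmp j).map_eq, integral_map (hmp j).measurable.aemeasurable]
    rw [(hmp j).map_eq]
    exact hGm.aestronglyMeasurable
  -- pointwise Jensen
  have hpt : ∀ y : Fin (K + 1) → Θ,
      ∑ j : Fin (K + 1), ((K:ℝ) + 1)⁻¹ * G (T j y)
        ≤ Real.log ((∑ k, f (y k)) / (K + 1)) := by
    intro y
    set S : ℝ := ∑ k, f (y k) with hS
    have hSj : ∀ j : Fin (K + 1), (∑ k : Fin K, f (y (j.succAbove k))) = S - f (y j) := by
      intro j
      have := Fin.sum_univ_succAbove (fun i => f (y i)) j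
      rw [hS, this]; ring
    have hSpos : ∀ j, 0 < S - f (y j) := by
      intro j
      rw [← hSj j]
      exact Finset.sum_pos (fun k _ => hf_pos _) Finset.univ_nonempty
    have hconc := (strictConcaveOn_log_Ioi.concaveOn).le_map_sum
      (t := (Finset.univ : Finset (Fin (K + 1))))
      (w := fun _ => ((K:ℝ) + 1)⁻¹)
      (p := fun j => (S - f (y j)) / K)
      (fun _ _ => by positivity)
      (by
        rw [Finset.sum_const, Finset.card_univ, Fintype.card_fin, nsmul_eq_mul]
        push_cast
        field_simp)
      (fun j _ => by
        have := hSpos j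
        exact Set.mem_Ioi.2 (by positivity))
    have hsum : ∑ j : Fin (K + 1), ((K:ℝ) + 1)⁻¹ • ((S - f (y j)) / K) = S / (K + 1) := by
      rw [← Finset.smul_sum]
      have : ∑ j : Fin (K + 1), (S - f (y j)) / K = S := by
        rw [← Finset.sum_div, Finset.sum_sub_distrib, Finset.sum_const, Finset.card_univ,
          Fintype.card_fin, nsmul_eq_mul, ← hS]
        push_cast
        field_simp
        ring
      rw [this, smul_eq_mul]
      ring
    calc ∑ j : Fin (K + 1), ((K:ℝ) + 1)⁻¹ * G (T j y)
        = ∑ j : Fin (K + 1), ((K:ℝ) + 1)⁻¹ • Real.log ((S - f (y j)) / K) := by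
          refine Finset.sum_congr rfl fun j _ => ?_
          rw [smul_eq_mul]
          congr 1
          show Real.log ((∑ k : Fin K, f (y (j.succAbove k))) / K)
            = Real.log ((S - f (y j)) / K)
          rw [hSj j]
      _ ≤ Real.log (∑ j : Fin (K + 1), ((K:ℝ) + 1)⁻¹ • ((S - f (y j)) / K)) := hconc
      _ = Real.log (S / (K + 1)) := by rw [hsum]
  -- integrate
  have hLHSint : Integrable
      (fun y : Fin (K + 1) → Θ => ∑ j : Fin (K + 1), ((K:ℝ) + 1)⁻¹ * G (T j y))
      (Measure.pi fun _ : Fin (K + 1) => ν) :=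
    integrable_finset_sum _ fun j _ => (hint_j j).const_mul _
  have hmono := integral_mono hLHSint h2 hpt
  have hLHS : ∫ y, (∑ j : Fin (K + 1), ((K:ℝ) + 1)⁻¹ * G (T j y))
      ∂(Measure.pi fun _ : Fin (K + 1) => ν)
      = ∫ y, G y ∂(Measure.pi fun _ : Fin K => ν) := by
    rw [integral_finset_sum _ fun j _ => (hint_j j).const_mul _]
    have : ∀ j : Fin (K + 1), ∫ y, ((K:ℝ) + 1)⁻¹ * G (T j y)
        ∂(Measure.pi fun _ : Fin (K + 1) => ν)
        = ((K:ℝ) + 1)⁻¹ * ∫ y, G y ∂(Measure.pi fun _ : Fin K => ν) := by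
      intro j
      rw [integral_const_mul, hintegral_j j]
    rw [Finset.sum_congr rfl fun j _ => this j, Finset.sum_const, Finset.card_univ,
      Fintype.card_fin, nsmul_eq_mul]
    have hne : ((K:ℝ) + 1) ≠ 0 := by positivity
    push_cast
    field_simp
  rw [hLHS] at hmono
  exact hmono

end JensenAux

open JensenAux in
/-- monotonicity in `K` of the Jensen-type cross-entropy bound:
for i.i.d. `ζ^k ~ p_θ(ζ)` and a positive function `ζ ↦ p_θ(z|ζ)` (here `f`),
`E_{ζ^{1..K}}[log (1/K)∑_k f(ζ^k)] ≤ E_{ζ^{1..K+1}}[log (1/(K+1))∑_k f(ζ^k)]`. -/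
theorem jensen_cross_entropy_monotone
    {Θ : Type*} [MeasurableSpace Θ]
    (μΘ : Measure Θ)
    (K : ℕ) (hK : 0 < K)
    (f : Θ → ℝ) (pζ : Θ → ℝ)
    (hf_pos : ∀ ζ, 0 < f ζ) (hf_meas : Measurable f)
    (hpζ_pos : ∀ ζ, 0 ≤ pζ ζ) (hpζ_one : ∫ ζ, pζ ζ ∂μΘ = 1)
    -- all expectations finite
    (hint : ∀ n : ℕ, Integrable
      (fun ζs : Fin n → Θ => (∏ k, pζ (ζs k)) * Real.log ((∑ k, f (ζs k)) / n))
      (Measure.pi fun _ : Fin n => μΘ)) :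
    (∫ ζs, (∏ k, pζ (ζs k)) * Real.log ((∑ k, f (ζs k)) / K)
        ∂(Measure.pi fun _ : Fin K => μΘ))
      ≤ ∫ ζs, (∏ k, pζ (ζs k)) * Real.log ((∑ k, f (ζs k)) / (K + 1))
        ∂(Measure.pi fun _ : Fin (K + 1) => μΘ) := by
  have hInt : Integrable pζ μΘ := by
    by_contra h
    rw [integral_undef h] at hpζ_one
    exact one_ne_zero hpζ_one.symm
  obtain ⟨g0, hg0m, hg0ae⟩ : ∃ g0 : Θ → ℝ, Measurable g0 ∧ pζ =ᵐ[μΘ] g0 :=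
    ⟨hInt.1.mk pζ, hInt.1.stronglyMeasurable_mk.measurable, hInt.1.ae_eq_mk⟩
  set g : Θ → ℝ := fun x => max (g0 x) 0 with hgdef
  have hgm : Measurable g := hg0m.max measurable_const
  have hgae : pζ =ᵐ[μΘ] g := hg0ae.mono fun x hx => by
    simp only [hgdef, ← hx]
    exact (max_eq_left (hpζ_pos x)).symm
  have hg_nonneg : ∀ x, 0 ≤ g x := fun x => le_max_right _ _
  have hgint : Integrable g μΘ := hInt.congr hgae
  set t : Set Θ := {x | 0 < g x} with htdef
  have ht : MeasurableSet t := measurableSet_lt measurable_const hgm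
  haveI hsf : SigmaFinite (μΘ.restrict t) := sigmaFinite_restrict_pos hgm hgint
  set wn : Θ → ℝ≥0 := fun x => (g x).toNNReal with hwndef
  have hwnm : Measurable wn := hgm.real_toNNReal
  set ν : Measure Θ := (μΘ.restrict t).withDensity (fun x => (wn x : ℝ≥0∞)) with hνdef
  haveI hν_prob : IsProbabilityMeasure ν := by
    constructor
    rw [hνdef, withDensity_apply _ MeasurableSet.univ, Measure.restrict_univ]
    have hgt : ∫ x, g x ∂(μΘ.restrict t) = 1 := by
      have h1 : ∫ x, g x ∂μΘ = 1 := by rw [← integral_congr_ae hgae]; exact hpζ_one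
      have h2 : g = t.indicator g := by
        funext x
        by_cases hx : x ∈ t
        · rw [Set.indicator_of_mem hx]
        · rw [Set.indicator_of_notMem hx]
          exact le_antisymm (not_lt.1 hx) (hg_nonneg x)
      rw [← h1]
      conv_rhs => rw [h2]
      rw [integral_indicator ht]
    calc ∫⁻ x, ((wn x : ℝ≥0∞)) ∂(μΘ.restrict t)
        = ∫⁻ x, ENNReal.ofReal (g x) ∂(μΘ.restrict t) := rfl
      _ = ENNReal.ofReal (∫ x, g x ∂(μΘ.restrict t)) :=
          (ofReal_integral_eq_lintegral_ofReal hgint.restrict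
            (Filter.Eventually.of_forall hg_nonneg)).symm
      _ = 1 := by rw [hgt, ENNReal.ofReal_one]
  have key : ∀ n : ℕ,
      Integrable (fun y : Fin n → Θ => Real.log ((∑ k, f (y k)) / n))
        (Measure.pi fun _ : Fin n => ν)
      ∧ (∫ ζs, (∏ k, pζ (ζs k)) * Real.log ((∑ k, f (ζs k)) / n)
          ∂(Measure.pi fun _ : Fin n => μΘ))
        = ∫ y, Real.log ((∑ k, f (y k)) / n) ∂(Measure.pi fun _ : Fin n => ν) := by
    intro n
    have hae : (fun ζs : Fin n → Θ => (∏ k, pζ (ζs k)) * Real.log ((∑ k, f (ζs k)) / n))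
        =ᵐ[Measure.pi fun _ : Fin n => μΘ]
        (fun ζs => (∏ k, g (ζs k)) * Real.log ((∑ k, f (ζs k)) / n)) := by
      have hall : ∀ᵐ ζs ∂(Measure.pi fun _ : Fin n => μΘ),
          ∀ k : Fin n, pζ (ζs k) = g (ζs k) := by
        rw [ae_all_iff]
        intro k
        refine ae_iff.2 ?_
        have hs : {ζs : Fin n → Θ | ¬ pζ (ζs k) = g (ζs k)}
            = Function.eval k ⁻¹' {x | ¬ pζ x = g x} := rfl
        rw [hs]
        exact pi_eval_preimage_null' μΘ k (ae_iff.1 hgae)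
      refine hall.mono fun ζs hz => ?_
      show (∏ k, pζ (ζs k)) * Real.log ((∑ k, f (ζs k)) / n)
        = (∏ k, g (ζs k)) * Real.log ((∑ k, f (ζs k)) / n)
      rw [Finset.prod_congr rfl fun k _ => hz k]
    set B : Set (Fin n → Θ) := Set.univ.pi (fun _ : Fin n => t) with hBdef
    have hB : MeasurableSet B := MeasurableSet.pi countable_univ fun i _ => ht
    have hind : (fun ζs : Fin n → Θ => (∏ k, g (ζs k)) * Real.log ((∑ k, f (ζs k)) / n))
        = B.indicator (fun ζs => (∏ k, g (ζs k)) * Real.log ((∑ k, f (ζs k)) / n)) := by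
      funext ζs
      by_cases hz : ζs ∈ B
      · rw [Set.indicator_of_mem hz]
      · rw [Set.indicator_of_notMem hz]
        have hex : ∃ k : Fin n, ζs k ∉ t := by
          by_contra hcon
          push_neg at hcon
          exact hz fun k _ => hcon k
        obtain ⟨k, hk⟩ := hex
        have hzk : g (ζs k) = 0 := le_antisymm (not_lt.1 hk) (hg_nonneg _)
        rw [Finset.prod_eq_zero (Finset.mem_univ k) hzk, zero_mul]
    have hsfd : SigmaFinite ((μΘ.restrict t).withDensity fun x => ((wn x : ℝ≥0∞))) := by
      rw [← hνdef]; infer_instance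
    have hmeq : (Measure.pi fun _ : Fin n => ν)
        = (Measure.pi fun _ : Fin n => μΘ.restrict t).withDensity
            (fun x => ∏ i, ((wn (x i) : ℝ≥0∞))) := by
      rw [hνdef]
      exact pi_withDensity (μΘ.restrict t) _ (hwnm.coe_nnreal_ennreal) n
    have hWm : Measurable (fun x : Fin n → Θ => ∏ i, wn (x i)) :=
      Finset.measurable_prod _ fun i _ => hwnm.comp (measurable_pi_apply i)
    have hcoe : (fun x : Fin n → Θ => ((∏ i, wn (x i) : ℝ≥0) : ℝ≥0∞))
        = fun x => ∏ i, ((wn (x i) : ℝ≥0∞)) := by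
      funext x
      push_cast
      rfl
    have hsmul : ∀ x : Fin n → Θ, (∏ i, wn (x i)) • Real.log ((∑ k, f (x k)) / n)
        = (∏ i, g (x i)) * Real.log ((∑ k, f (x k)) / n) := by
      intro x
      rw [NNReal.smul_def, smul_eq_mul]
      congr 1
      push_cast
      exact Finset.prod_congr rfl fun i _ => Real.coe_toNNReal _ (hg_nonneg _)
    have hres : Integrable
        (fun ζs : Fin n → Θ => (∏ k, g (ζs k)) * Real.log ((∑ k, f (ζs k)) / n))
        (Measure.pi fun _ : Fin n => μΘ.restrict t) := by
      rw [pi_restrict_eq μΘ ht n]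
      exact ((hint n).congr hae).restrict
    constructor
    · rw [hmeq, ← hcoe, integrable_withDensity_iff_integrable_smul hWm]
      exact hres.congr (Filter.Eventually.of_forall fun x => (hsmul x).symm)
    · calc ∫ ζs, (∏ k, pζ (ζs k)) * Real.log ((∑ k, f (ζs k)) / n)
            ∂(Measure.pi fun _ : Fin n => μΘ)
          = ∫ ζs, (∏ k, g (ζs k)) * Real.log ((∑ k, f (ζs k)) / n)
            ∂(Measure.pi fun _ : Fin n => μΘ) := integral_congr_ae hae
        _ = ∫ ζs in B, (∏ k, g (ζs k)) * Real.log ((∑ k, f (ζs k)) / n)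
            ∂(Measure.pi fun _ : Fin n => μΘ) := by
            conv_lhs => rw [hind]
            rw [integral_indicator hB]
        _ = ∫ ζs, (∏ k, g (ζs k)) * Real.log ((∑ k, f (ζs k)) / n)
            ∂(Measure.pi fun _ : Fin n => μΘ.restrict t) := by
            rw [pi_restrict_eq μΘ ht n]
        _ = ∫ y, Real.log ((∑ k, f (y k)) / n) ∂(Measure.pi fun _ : Fin n => ν) := by
            rw [hmeq, ← hcoe, integral_withDensity_eq_integral_smul hWm]
            exact integral_congr_ae (Filter.Eventually.of_forall fun x => (hsmul x).symm)
  obtain ⟨hi1, he1⟩ := key K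
  obtain ⟨hi2, he2⟩ := key (K + 1)
  have hcast : ((K + 1 : ℕ) : ℝ) = (K : ℝ) + 1 := by push_cast; ring
  rw [hcast] at hi2 he2
  rw [he1, he2]
  exact key_ineq ν K hK f hf_pos hf_meas hi1 hi2
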